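/- Every d-collapsible simplicial complex K is d-Leray: for every induced subcomplex L of K and every j ≥ d, the reduced simplicial homology group H̃_j(L) vanishes. -/

import Mathlib

variable {V : Type*} [Fintype V] [LinearOrder V]

open Finset


/-- `W` dominates the set `A` in `G`: every vertex of `A` is in `W` or adjacent to a vertex of `W`. -/
def Dominates (G : SimpleGraph V) (W A : Finset V) : Prop :=
  ∀ a ∈ A, a ∈ W ∨ ∃ w ∈ W, G.Adj w a

/-- `I` is an independent set of `G`. -/
def IndepSet (G : SimpleGraph V) (I : Finset V) : Prop :=
  ∀ u ∈ I, ∀ v ∈ I, ¬ G.Adj u v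

instance (G : SimpleGraph V) [DecidableRel G.Adj] (I : Finset V) :
    Decidable (IndepSet G I) := by unfold IndepSet; infer_instance

/-- The domination number of `G`. -/
noncomputable def gamma (G : SimpleGraph V) : ℕ :=
  sInf {k | ∃ W : Finset V, W.card = k ∧ Dominates G W Finset.univ}

/-- The independence domination number of `G`. -/
noncomputable def igamma (G : SimpleGraph V) : ℕ :=
  sInf {k | ∀ I : Finset V, IndepSet G I → ∃ W : Finset V, W.card ≤ k ∧ Dominates G W I}

/-- The noncover complex of `G`: faces are the vertex sets whose complement is not independent. -/
def NC (G : SimpleGraph V) [DecidableRel G.Adj] : Finset (Finset V) :=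
  Finset.univ.filter fun W => ¬ IndepSet G Wᶜ

/-- The independence complex of `G`. -/
def IndComplex (G : SimpleGraph V) [DecidableRel G.Adj] : Finset (Finset V) :=
  Finset.univ.filter fun I => IndepSet G I

/-- The combinatorial Alexander dual of a complex on the full vertex set `V`. -/
def AlexDual (K : Finset (Finset V)) : Finset (Finset V) :=
  Finset.univ.filter fun s => sᶜ ∉ K

/-- `K` is a simplicial complex (downward closed family of finite sets). -/
def IsComplex (K : Finset (Finset V)) : Prop :=
  ∀ σ ∈ K, ∀ τ ⊆ σ, τ ∈ K

/-- `s` is a maximal face (facet) of `K`. -/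
def IsMaxFace (K : Finset (Finset V)) (s : Finset V) : Prop :=
  s ∈ K ∧ ∀ t ∈ K, s ⊆ t → t = s

/-- `σ` is a free face of `K`: a face contained in a unique maximal face. -/
def IsFreeFace (K : Finset (Finset V)) (σ : Finset V) : Prop :=
  σ ∈ K ∧ ∃ τ ∈ K, σ ⊆ τ ∧ ∀ ρ ∈ K, σ ⊆ ρ → ρ ⊆ τ

/-- `K'` is obtained from `K` by an elementary `d`-collapse. -/
def ElemCollapse (d : ℕ) (K K' : Finset (Finset V)) : Prop :=
  ∃ σ : Finset V, IsFreeFace K σ ∧ σ.card ≤ d ∧ K' = K.filter fun ρ => ¬ σ ⊆ ρ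

/-- `K` is `d`-collapsible. -/
def Collapsible (d : ℕ) (K : Finset (Finset V)) : Prop :=
  Relation.ReflTransGen (ElemCollapse d) K ∅

/-- chordality -/
def IsChordal (G : SimpleGraph V) : Prop :=
  ∀ (u : V) (c : G.Walk u u), c.IsCycle → 4 ≤ c.length →
    ∃ x ∈ c.support, ∃ y ∈ c.support, G.Adj x y ∧ s(x, y) ∉ c.edges

/-- simplicial vertex -/
def IsSimplicialVtx (G : SimpleGraph V) (v : V) : Prop :=
  ∀ x y : V, G.Adj v x → G.Adj v y → x ≠ y → G.Adj x y


/-- The group of simplicial `ℤ`-chains of `K` supported on faces of cardinality `k`. -/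
abbrev chainC (K : Finset (Finset V)) (k : ℕ) : Type _ :=
  {s : Finset V // s ∈ K ∧ s.card = k} → ℤ

/-- The simplicial boundary map from chains on faces of cardinality `k+1`
to chains on faces of cardinality `k` (for `k = 0` this is the augmentation map,
so the associated homology is reduced homology). -/
noncomputable def bdry (K : Finset (Finset V)) (k : ℕ) :
    chainC K (k + 1) →ₗ[ℤ] chainC K k where
  toFun c t :=
    ∑ s : {s : Finset V // s ∈ K ∧ s.card = k + 1},
      if t.1 ⊆ s.1 then
        (∑ v ∈ s.1 \ t.1, (-1 : ℤ) ^ (t.1.filter (· < v)).card) * c s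
      else 0
  map_add' c c' := by
    funext t
    simp only [Pi.add_apply]
    rw [← Finset.sum_add_distrib]
    exact Finset.sum_congr rfl fun s _ => by split <;> ring
  map_smul' r c := by
    funext t
    simp only [Pi.smul_apply, smul_eq_mul, RingHom.id_apply]
    rw [Finset.mul_sum]
    exact Finset.sum_congr rfl fun s _ => by split <;> ring

/-- The reduced simplicial homology of `K` (with `ℤ` coefficients) in dimension `j ≥ 0`:
cycles of dimension `j` (faces of cardinality `j+1`) modulo boundaries. -/
noncomputable abbrev rHomology (K : Finset (Finset V)) (j : ℕ) :=
  LinearMap.ker (bdry K j) ⧸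
    (LinearMap.range (bdry K (j + 1))).comap (LinearMap.ker (bdry K j)).subtype

/-- Vanishing of the reduced simplicial homology `H̃_j(K)` with `ℤ` coefficients,
for an arbitrary integer dimension `j` (trivial for `j ≤ -2`). -/
def RHomVanishes (K : Finset (Finset V)) (j : ℤ) : Prop :=
  if j ≤ -2 then True
  else if j = -1 then ∀ c : chainC K 0, ∃ b : chainC K 1, bdry K 0 b = c
  else ∀ c : chainC K (j.toNat + 1), bdry K j.toNat c = 0 →
    ∃ b : chainC K (j.toNat + 2), bdry K (j.toNat + 1) b = c


section AuxLeray

/-- Incidence coefficient. -/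
def coeff (t s : Finset V) : ℤ := ∑ v ∈ s \ t, (-1 : ℤ) ^ (t.filter (· < v)).card

lemma insert_sdiff_self' {t : Finset V} {v : V} (hv : v ∉ t) : insert v t \ t = {v} := by
  ext x
  simp only [Finset.mem_sdiff, Finset.mem_insert, Finset.mem_singleton]
  constructor
  · rintro ⟨h | h, h2⟩
    · exact h
    · exact absurd h h2
  · rintro rfl
    exact ⟨Or.inl rfl, hv⟩

lemma coeff_insert {t : Finset V} {v : V} (hv : v ∉ t) :
    coeff t (insert v t) = (-1 : ℤ) ^ (t.filter (· < v)).card := by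
  rw [coeff, insert_sdiff_self' hv, Finset.sum_singleton]

lemma coeff_insert_sq {t : Finset V} {v : V} (hv : v ∉ t) :
    coeff t (insert v t) * coeff t (insert v t) = 1 := by
  rw [coeff_insert hv, ← pow_add]
  exact Even.neg_one_pow ⟨_, rfl⟩

lemma sign2 {t : Finset V} {a b : V} (ha : a ∉ t) (hb : b ∉ t) (hab : a ≠ b) :
    coeff t (insert a t) * coeff (insert a t) (insert b (insert a t)) +
    coeff t (insert b t) * coeff (insert b t) (insert a (insert b t)) = 0 := by
  have hba : b ∉ insert a t := by simp [Finset.mem_insert, hb, hab.symm]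
  have hab' : a ∉ insert b t := by simp [Finset.mem_insert, ha, hab]
  rw [coeff_insert ha, coeff_insert hb, coeff_insert hba, coeff_insert hab',
    Finset.filter_insert, Finset.filter_insert]
  rcases lt_or_gt_of_ne hab with h | h
  · rw [if_pos h, if_neg (not_lt.2 h.le),
      Finset.card_insert_of_notMem (by simp [ha]), pow_succ]
    ring
  · rw [if_pos h, if_neg (not_lt.2 h.le),
      Finset.card_insert_of_notMem (by simp [hb]), pow_succ]
    ring

/-- Boundary operator acting on plain functions. -/
def fbdry (K : Finset (Finset V)) (k : ℕ) (f : Finset V → ℤ) (t : Finset V) : ℤ :=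
  ∑ s ∈ K.filter (fun s => s.card = k + 1), if t ⊆ s then coeff t s * f s else 0

lemma bdry_eq_fbdry {K : Finset (Finset V)} {k : ℕ} (c : chainC K (k + 1))
    (f : Finset V → ℤ) (hf : ∀ s (h : s ∈ K ∧ s.card = k + 1), f s = c ⟨s, h⟩)
    (t : {s : Finset V // s ∈ K ∧ s.card = k}) :
    bdry K k c t = fbdry K k f t.1 := by
  show (∑ s : {s : Finset V // s ∈ K ∧ s.card = k + 1},
      if t.1 ⊆ s.1 then coeff t.1 s.1 * c s else 0) = _
  rw [fbdry, Finset.sum_subtype (p := fun s => s ∈ K ∧ s.card = k + 1)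
    (K.filter fun s => s.card = k + 1)
    (by intro x; simp [Finset.mem_filter]) (fun s => if t.1 ⊆ s then coeff t.1 s * f s else 0)]
  refine Finset.sum_congr rfl fun s _ => ?_
  rw [hf s.1 s.2]

lemma fbdry_sub {K : Finset (Finset V)} {k : ℕ} (f g : Finset V → ℤ) (t : Finset V) :
    fbdry K k (fun s => f s - g s) t = fbdry K k f t - fbdry K k g t := by
  rw [fbdry, fbdry, fbdry, ← Finset.sum_sub_distrib]
  exact Finset.sum_congr rfl fun s _ => by split <;> ring

lemma fbdry_add {K : Finset (Finset V)} {k : ℕ} (f g : Finset V → ℤ) (t : Finset V) :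
    fbdry K k (fun s => f s + g s) t = fbdry K k f t + fbdry K k g t := by
  rw [fbdry, fbdry, fbdry, ← Finset.sum_add_distrib]
  exact Finset.sum_congr rfl fun s _ => by split <;> ring

lemma fbdry_congr {K : Finset (Finset V)} {k : ℕ} {t : Finset V} {f g : Finset V → ℤ}
    (h : ∀ s ∈ K, s.card = k + 1 → f s = g s) :
    fbdry K k f t = fbdry K k g t := by
  refine Finset.sum_congr rfl fun s hs => ?_
  obtain ⟨h1, h2⟩ := Finset.mem_filter.1 hs
  rw [h s h1 h2]

lemma fbdry_filter {K : Finset (Finset V)} {p : Finset V → Prop} [DecidablePred p]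
    {k : ℕ} {f : Finset V → ℤ} {t : Finset V}
    (hf : ∀ s ∈ K, s.card = k + 1 → ¬ p s → f s = 0) :
    fbdry (K.filter p) k f t = fbdry K k f t := by
  rw [fbdry, fbdry]
  apply Finset.sum_subset
  · intro s hs
    simp only [Finset.mem_filter] at hs ⊢
    exact ⟨hs.1.1, hs.2⟩
  · intro s hs hns
    simp only [Finset.mem_filter] at hs hns
    have h0 : f s = 0 := hf s hs.1 hs.2 (fun hp => hns ⟨⟨hs.1, hp⟩, hs.2⟩)
    split <;> simp [h0]

lemma inner_zero {K : Finset (Finset V)} (hK : IsComplex K) {k : ℕ} {t u : Finset V}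
    (ht : t.card = k) (hu : u ∈ K) (hcu : u.card = k + 2) :
    ∑ s ∈ K.filter (fun s => s.card = k + 1),
      (if t ⊆ s then coeff t s else 0) * (if s ⊆ u then coeff s u else 0) = 0 := by
  by_cases htu : t ⊆ u
  · obtain ⟨a, b, hab, hdiff⟩ : ∃ a b, a ≠ b ∧ u \ t = {a, b} := by
      apply Finset.card_eq_two.mp
      rw [Finset.card_sdiff_of_subset htu, hcu, ht]
      omega
    have hamem : a ∈ u \ t := hdiff ▸ Finset.mem_insert_self a {b}
    have hbmem : b ∈ u \ t := hdiff ▸ Finset.mem_insert_of_mem (Finset.mem_singleton_self b)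
    have haU : a ∈ u := (Finset.mem_sdiff.1 hamem).1
    have hat : a ∉ t := (Finset.mem_sdiff.1 hamem).2
    have hbU : b ∈ u := (Finset.mem_sdiff.1 hbmem).1
    have hbt : b ∉ t := (Finset.mem_sdiff.1 hbmem).2
    have hAu : insert a t ⊆ u := Finset.insert_subset haU htu
    have hBu : insert b t ⊆ u := Finset.insert_subset hbU htu
    have hA : insert a t ∈ K := hK u hu _ hAu
    have hB : insert b t ∈ K := hK u hu _ hBu
    have hAB : insert a t ≠ insert b t := by
      intro h
      have : a ∈ insert b t := h ▸ Finset.mem_insert_self a t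
      rcases Finset.mem_insert.1 this with h' | h'
      · exact hab h'
      · exact hat h'
    have hsub : ({insert a t, insert b t} : Finset (Finset V)) ⊆
        K.filter (fun s => s.card = k + 1) := by
      intro s hs
      rcases Finset.mem_insert.1 hs with rfl | hs
      · exact Finset.mem_filter.2 ⟨hA, by rw [Finset.card_insert_of_notMem hat, ht]⟩
      · rw [Finset.mem_singleton] at hs
        subst hs
        exact Finset.mem_filter.2 ⟨hB, by rw [Finset.card_insert_of_notMem hbt, ht]⟩
    rw [← Finset.sum_subset hsub ?_]
    · rw [Finset.sum_pair hAB]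
      have hu1 : u = insert b (insert a t) := by
        refine (Finset.eq_of_subset_of_card_le
          (Finset.insert_subset hbU hAu) ?_).symm
        rw [Finset.card_insert_of_notMem (by simp [Finset.mem_insert, hbt, hab.symm]),
          Finset.card_insert_of_notMem hat, ht, hcu]
      have hu2 : u = insert a (insert b t) := by
        rw [hu1, Finset.insert_comm]
      rw [if_pos (Finset.subset_insert a t), if_pos hAu,
        if_pos (Finset.subset_insert b t), if_pos hBu]
      nth_rewrite 2 [hu2]
      nth_rewrite 1 [hu1]
      exact sign2 hat hbt hab
    · intro s hs hns
      obtain ⟨hsK, hsc⟩ := Finset.mem_filter.1 hs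
      by_cases h1 : t ⊆ s
      · by_cases h2 : s ⊆ u
        · exfalso
          apply hns
          have h3 : s \ t ⊆ {a, b} := hdiff ▸ Finset.sdiff_subset_sdiff h2 Finset.Subset.rfl
          have h4 : (s \ t).card = 1 := by rw [Finset.card_sdiff_of_subset h1, hsc, ht]; omega
          obtain ⟨x, hx⟩ := Finset.card_eq_one.1 h4
          have hxab : x ∈ ({a, b} : Finset V) := h3 (hx ▸ Finset.mem_singleton_self x)
          have hs' : s = insert x t := by
            rw [Finset.insert_eq, Finset.union_comm, ← hx, Finset.union_sdiff_of_subset h1]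
          rcases Finset.mem_insert.1 hxab with rfl | hxb
          · exact hs' ▸ Finset.mem_insert_self _ _
          · rw [Finset.mem_singleton] at hxb
            subst hxb
            exact hs' ▸ Finset.mem_insert_of_mem (Finset.mem_singleton_self _)
        · simp [h2]
      · simp [h1]
  · apply Finset.sum_eq_zero
    intro s _
    by_cases h1 : t ⊆ s
    · by_cases h2 : s ⊆ u
      · exact absurd (h1.trans h2) htu
      · simp [h2]
    · simp [h1]

lemma fbdry_fbdry {K : Finset (Finset V)} (hK : IsComplex K) (k : ℕ) (g : Finset V → ℤ)
    {t : Finset V} (ht : t.card = k) :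
    fbdry K k (fbdry K (k + 1) g) t = 0 := by
  have hrw : ∀ s, (if t ⊆ s then coeff t s * fbdry K (k + 1) g s else 0)
      = ∑ u ∈ K.filter (fun u => u.card = k + 1 + 1),
        ((if t ⊆ s then coeff t s else 0) * (if s ⊆ u then coeff s u else 0)) * g u := by
    intro s
    split
    · rw [fbdry, Finset.mul_sum]
      exact Finset.sum_congr rfl fun u _ => by split <;> ring
    · simp
  rw [fbdry]
  rw [Finset.sum_congr rfl fun s _ => hrw s, Finset.sum_comm]
  apply Finset.sum_eq_zero
  intro u hu
  obtain ⟨huK, huc⟩ := Finset.mem_filter.1 hu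
  rw [← Finset.sum_mul, inner_zero hK ht huK (by omega), zero_mul]

/-- The key homological property: every cycle of dimension `j` is a boundary. -/
def VanishOn (K : Finset (Finset V)) (j : ℕ) : Prop :=
  ∀ f : Finset V → ℤ, (∀ t ∈ K, t.card = j → fbdry K j f t = 0) →
    ∃ g : Finset V → ℤ, ∀ t ∈ K, t.card = j + 1 → fbdry K (j + 1) g t = f t

lemma elemCollapse_isComplex {d : ℕ} {K K' : Finset (Finset V)} (hK : IsComplex K)
    (h : ElemCollapse d K K') : IsComplex K' := by
  obtain ⟨σ, -, -, rfl⟩ := h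
  intro ρ hρ τ hτ
  rw [Finset.mem_filter] at hρ ⊢
  exact ⟨hK ρ hρ.1 τ hτ, fun hστ => hρ.2 (hστ.trans hτ)⟩

lemma vanish_step {K : Finset (Finset V)} (hK : IsComplex K) {d : ℕ} {σ : Finset V}
    (hfree : IsFreeFace K σ) (hσd : σ.card ≤ d) {j : ℕ} (hdj : d ≤ j)
    (ih : VanishOn (K.filter fun ρ => ¬ σ ⊆ ρ) j) : VanishOn K j := by
  obtain ⟨hσK, τ, hτK, hστ, hmax⟩ := hfree
  intro f hcyc
  by_cases hστ' : σ = τ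
  · -- the removed part is a single face of small dimension
    have hmem : ∀ s ∈ K, j + 1 ≤ s.card →
        s ∈ K.filter fun ρ => ¬ σ ⊆ ρ := by
      intro s hs hc
      refine Finset.mem_filter.2 ⟨hs, fun hσs => ?_⟩
      have h1 : s ⊆ σ := hστ' ▸ hmax s hs hσs
      have h2 : s = σ := Finset.Subset.antisymm h1 hσs
      have := h2 ▸ hc
      omega
    have hfaces : ∀ k : ℕ, j + 1 ≤ k + 1 →
        K.filter (fun s => s.card = k + 1)
          = (K.filter fun ρ => ¬ σ ⊆ ρ).filter (fun s => s.card = k + 1) := by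
      intro k hk
      ext s
      simp only [Finset.mem_filter]
      constructor
      · rintro ⟨hs, hc⟩
        have := hmem s hs (by omega)
        rw [Finset.mem_filter] at this
        exact ⟨this, hc⟩
      · rintro ⟨⟨hs, -⟩, hc⟩
        exact ⟨hs, hc⟩
    have hfb : ∀ k : ℕ, j ≤ k → ∀ (g : Finset V → ℤ) (t : Finset V),
        fbdry K k g t = fbdry (K.filter fun ρ => ¬ σ ⊆ ρ) k g t := by
      intro k hk g t
      rw [fbdry, fbdry, hfaces k (by omega)]
    obtain ⟨g, hg⟩ := ih f (fun t ht hc => by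
      rw [← hfb j le_rfl]
      exact hcyc t (Finset.mem_filter.1 ht).1 hc)
    refine ⟨g, fun t ht hc => ?_⟩
    rw [hfb (j + 1) (by omega)]
    exact hg t (hmem t ht (by omega)) hc
  · obtain ⟨v, hvτ, hvσ⟩ : ∃ v ∈ τ, v ∉ σ := by
      by_contra h
      push_neg at h
      exact hστ' (Finset.Subset.antisymm hστ h)
    set g₁ : Finset V → ℤ :=
      fun s => if σ ⊆ s ∧ v ∈ s then coeff (s.erase v) s * f (s.erase v) else 0 with hg₁
    set f' : Finset V → ℤ := fun s => f s - fbdry K (j + 1) g₁ s with hf'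
    have hC1 : ∀ ρ ∈ K, ρ.card = j + 1 → σ ⊆ ρ → v ∉ ρ → f' ρ = 0 := by
      intro ρ hρK hρc hσρ hvρ
      have hρτ : ρ ⊆ τ := hmax ρ hρK hσρ
      have hs0K : insert v ρ ∈ K := hK τ hτK _ (Finset.insert_subset hvτ hρτ)
      have hs0c : (insert v ρ).card = j + 1 + 1 := by
        rw [Finset.card_insert_of_notMem hvρ, hρc]
      have hb : fbdry K (j + 1) g₁ ρ = f ρ := by
        rw [fbdry, Finset.sum_eq_single_of_mem (insert v ρ)
          (Finset.mem_filter.2 ⟨hs0K, hs0c⟩)]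
        · rw [if_pos (Finset.subset_insert _ _), hg₁]
          simp only
          rw [if_pos ⟨hσρ.trans (Finset.subset_insert _ _), Finset.mem_insert_self _ _⟩,
            Finset.erase_insert hvρ, ← mul_assoc, coeff_insert_sq hvρ, one_mul]
        · intro s hs hne
          obtain ⟨hsK, hsc⟩ := Finset.mem_filter.1 hs
          by_cases h1 : ρ ⊆ s
          · have hzero : g₁ s = 0 := by
              rw [hg₁]
              simp only
              rw [if_neg]
              rintro ⟨-, hvs⟩
              exact hne (Finset.eq_of_subset_of_card_le
                (Finset.insert_subset hvs h1) (by omega)).symm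
            simp [hzero]
          · simp [h1]
      rw [hf']
      simp only
      rw [hb, sub_self]
    have hcyc' : ∀ t ∈ K, t.card = j → fbdry K j f' t = 0 := by
      intro t htK htc
      rw [hf', fbdry_sub, hcyc t htK htc, fbdry_fbdry hK j g₁ htc, sub_zero]
    have hC3 : ∀ ρ ∈ K, ρ.card = j + 1 → σ ⊆ ρ → f' ρ = 0 := by
      intro ρ hρK hρc hσρ
      by_cases hvρ : v ∈ ρ
      · set t := ρ.erase v with htdef
        have htK : t ∈ K := hK ρ hρK _ (Finset.erase_subset _ _)
        have htc : t.card = j := by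
          rw [htdef, Finset.card_erase_of_mem hvρ, hρc]
          omega
        have hσt : σ ⊆ t := fun x hx =>
          Finset.mem_erase.2 ⟨fun h => hvσ (h ▸ hx), hσρ hx⟩
        have hρt : ρ = insert v t := (Finset.insert_erase hvρ).symm
        have h0 := hcyc' t htK htc
        rw [fbdry, Finset.sum_eq_single_of_mem ρ (Finset.mem_filter.2 ⟨hρK, hρc⟩)] at h0
        · rw [if_pos (Finset.erase_subset _ _)] at h0
          have hsq : coeff t ρ * coeff t ρ = 1 := by
            rw [hρt]
            exact coeff_insert_sq (Finset.notMem_erase _ _)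
          calc f' ρ = (coeff t ρ * coeff t ρ) * f' ρ := by rw [hsq, one_mul]
            _ = coeff t ρ * (coeff t ρ * f' ρ) := by ring
            _ = 0 := by rw [h0, mul_zero]
        · intro s hs hne
          obtain ⟨hsK, hsc⟩ := Finset.mem_filter.1 hs
          by_cases h1 : t ⊆ s
          · have hσs : σ ⊆ s := hσt.trans h1
            by_cases hvs : v ∈ s
            · exfalso
              apply hne
              have h2 : ρ ⊆ s := hρt ▸ Finset.insert_subset hvs h1
              exact (Finset.eq_of_subset_of_card_le h2 (by omega)).symm
            · rw [if_pos h1, hC1 s hsK hsc hσs hvs, mul_zero]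
          · exact if_neg h1
      · exact hC1 ρ hρK hρc hσρ hvρ
    have hcycK' : ∀ t ∈ (K.filter fun ρ => ¬ σ ⊆ ρ), t.card = j →
        fbdry (K.filter fun ρ => ¬ σ ⊆ ρ) j f' t = 0 := by
      intro t htK' htc
      rw [fbdry_filter (fun s hs hc hp => hC3 s hs hc (not_not.1 hp))]
      exact hcyc' t (Finset.mem_filter.1 htK').1 htc
    obtain ⟨g₂, hg₂⟩ := ih f' hcycK'
    set g₂' : Finset V → ℤ := fun s => if σ ⊆ s then 0 else g₂ s with hg₂def
    have hg₂'0 : ∀ s ∈ K, s.card = j + 1 + 1 → σ ⊆ s → g₂' s = 0 := by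
      intro s _ _ h
      rw [hg₂def]
      simp [h]
    refine ⟨fun s => g₁ s + g₂' s, ?_⟩
    intro t htK htc
    rw [fbdry_add]
    have key : fbdry K (j + 1) g₂' t = f' t := by
      by_cases hσt : σ ⊆ t
      · have h1 : fbdry K (j + 1) g₂' t = 0 := by
          rw [fbdry]
          apply Finset.sum_eq_zero
          intro s hs
          obtain ⟨hsK, hsc⟩ := Finset.mem_filter.1 hs
          by_cases h2 : t ⊆ s
          · rw [if_pos h2, hg₂'0 s hsK hsc (hσt.trans h2), mul_zero]
          · exact if_neg h2
        rw [h1, hC3 t htK htc hσt]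
      · have htK' : t ∈ (K.filter fun ρ => ¬ σ ⊆ ρ) := Finset.mem_filter.2 ⟨htK, hσt⟩
        rw [← fbdry_filter (p := fun ρ => ¬ σ ⊆ ρ)
          (fun s hs hc hp => hg₂'0 s hs hc (not_not.1 hp))]
        rw [fbdry_congr (f := g₂') (g := g₂) (fun s hs _ => by
          rw [hg₂def]
          simp [(Finset.mem_filter.1 hs).2])]
        exact hg₂ t htK' htc
    rw [key, hf']
    simp only
    ring

lemma collapsible_vanishOn {d j : ℕ} (hdj : d ≤ j) :
    ∀ {K : Finset (Finset V)}, Collapsible d K → IsComplex K → VanishOn K j := by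
  intro K hcol
  induction hcol using Relation.ReflTransGen.head_induction_on with
  | refl =>
    intro _ f _
    exact ⟨0, fun t ht => absurd ht (Finset.notMem_empty t)⟩
  | head hstep _ ih =>
    intro hK
    obtain ⟨σ, hfree, hσd, hKeq⟩ := hstep
    subst hKeq
    exact vanish_step hK hfree hσd hdj
      (ih (elemCollapse_isComplex hK ⟨σ, hfree, hσd, rfl⟩))

lemma collapsible_restrict {d : ℕ} (U : Finset V) :
    ∀ {K : Finset (Finset V)}, Collapsible d K → IsComplex K →
      Collapsible d (K.filter fun s => s ⊆ U) := by
  intro K hcol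
  induction hcol using Relation.ReflTransGen.head_induction_on with
  | refl =>
    intro _
    rw [Finset.filter_empty]
    exact Relation.ReflTransGen.refl
  | @head A B hstep _ ih =>
    intro hK
    obtain ⟨σ, ⟨hσK, τ, hτK, hστ, hmax⟩, hσd, hKeq⟩ := hstep
    subst hKeq
    have hK' : IsComplex _ :=
      elemCollapse_isComplex hK ⟨σ, ⟨hσK, τ, hτK, hστ, hmax⟩, hσd, rfl⟩
    by_cases hσU : σ ⊆ U
    · refine Relation.ReflTransGen.head ⟨σ, ?_, hσd, ?_⟩ (ih hK')
      · refine ⟨Finset.mem_filter.2 ⟨hσK, hσU⟩, τ ∩ U,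
          Finset.mem_filter.2 ⟨hK τ hτK _ Finset.inter_subset_left,
            Finset.inter_subset_right⟩,
          Finset.subset_inter hστ hσU, fun ρ hρ hσρ => ?_⟩
        exact Finset.subset_inter (hmax ρ (Finset.mem_filter.1 hρ).1 hσρ)
          (Finset.mem_filter.1 hρ).2
      · rw [Finset.filter_comm]
    · have heq : (A.filter fun s => s ⊆ U)
          = ((A.filter fun ρ => ¬ σ ⊆ ρ).filter fun s => s ⊆ U) := by
        ext s
        simp only [Finset.mem_filter]
        constructor
        · rintro ⟨h1, h2⟩
          exact ⟨⟨h1, fun h => hσU (h.trans h2)⟩, h2⟩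
        · rintro ⟨⟨h1, -⟩, h2⟩
          exact ⟨h1, h2⟩
      rw [heq]
      exact ih hK'

end AuxLeray

/-- Every `d`-collapsible complex is `d`-Leray: every induced subcomplex has
vanishing reduced homology in all dimensions `j ≥ d`. -/
theorem collapsible_is_Leray (K : Finset (Finset V)) (hK : IsComplex K) (d : ℕ)
    (hcol : Collapsible d K) :
    ∀ U : Finset V, ∀ j : ℕ, d ≤ j →
      Subsingleton (rHomology (K.filter fun s => s ⊆ U) j) := by
  intro U j hdj
  set L := K.filter fun s => s ⊆ U with hL
  have hLc : IsComplex L := by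
    intro s hs t ht
    rw [hL, Finset.mem_filter] at hs ⊢
    exact ⟨hK s hs.1 t ht, ht.trans hs.2⟩
  have hvan : VanishOn L j := collapsible_vanishOn hdj (collapsible_restrict U hcol hK) hLc
  rw [Submodule.Quotient.subsingleton_iff, eq_top_iff]
  rintro ⟨c, hc⟩ -
  rw [Submodule.mem_comap]
  set f : Finset V → ℤ := fun s => if h : s ∈ L ∧ s.card = j + 1 then c ⟨s, h⟩ else 0 with hf
  have hfc : ∀ s (h : s ∈ L ∧ s.card = j + 1), f s = c ⟨s, h⟩ := by
    intro s h
    rw [hf]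
    exact dif_pos h
  have hcyc : ∀ t ∈ L, t.card = j → fbdry L j f t = 0 := by
    intro t htL htc
    have h0 : bdry L j c ⟨t, htL, htc⟩ = 0 := by
      rw [LinearMap.mem_ker.1 hc]
      rfl
    rw [← bdry_eq_fbdry c f hfc ⟨t, htL, htc⟩]
    exact h0
  obtain ⟨g, hg⟩ := hvan f hcyc
  refine ⟨(fun s => g s.1 : chainC L (j + 1 + 1)), ?_⟩
  funext t
  rw [bdry_eq_fbdry (fun s => g s.1) g (fun s h => rfl) t, hg t.1 t.2.1 t.2.2, hfc t.1 t.2]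
  rfl
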